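/- Under the assumptions of the previous bounding theorem, if additionally ψ(ν⁰) > 1 and ν̃ > δ_r is the unique solution of ψ(ν) = 1 on (δ_r, ∞), then the update ν¹ = ν⁰ + 2ψ(ν⁰)(1 - √ψ(ν⁰))/ψ'(ν⁰), which is the unique solution of F(ν) = 1 in (β, ∞), satisfies ν⁰ < ν¹ < ν̃. -/

import Mathlib

open scoped BigOperators

lemma two_mul_sqrt_le_add {x y : ℝ} (hx : 0 ≤ x) (hy : 0 ≤ y) :
    2 * Real.sqrt (x * y) ≤ x + y := by
  rw [Real.sqrt_mul hx]
  nlinarith [sq_nonneg (Real.sqrt x - Real.sqrt y), Real.sq_sqrt hx, Real.sq_sqrt hy]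

lemma two_mul_sqrt_lt_add {x y : ℝ} (hx : 0 ≤ x) (hy : 0 ≤ y) (hne : x ≠ y) :
    2 * Real.sqrt (x * y) < x + y := by
  have hs : Real.sqrt x ≠ Real.sqrt y := by
    intro h
    apply hne
    have := congrArg (fun t => t ^ 2) h
    simpa [Real.sq_sqrt hx, Real.sq_sqrt hy] using this
  rw [Real.sqrt_mul hx]
  nlinarith [sq_pos_of_ne_zero (sub_ne_zero.mpr hs), Real.sq_sqrt hx, Real.sq_sqrt hy]

/-- Strict Cauchy–Schwarz for finite sums, in the "r² = f·g" form. -/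
lemma strict_cauchy_schwarz {ι : Type*} [Fintype ι] (f g r : ι → ℝ)
    (hf : ∀ i, 0 ≤ f i) (hg : ∀ i, 0 ≤ g i) (hr : ∀ i, 0 ≤ r i)
    (ht : ∀ i, r i ^ 2 = f i * g i) (i0 ir : ι)
    (hlt : f ir * g i0 < f i0 * g ir) :
    (∑ i, r i) ^ 2 < (∑ i, f i) * (∑ i, g i) := by
  have hr' : ∀ i, r i = Real.sqrt (f i * g i) := fun i => by
    rw [← ht i, Real.sqrt_sq (hr i)]
  have key : ∀ i j, 2 * (r i * r j) ≤ f i * g j + f j * g i := by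
    intro i j
    have h1 : r i * r j = Real.sqrt ((f i * g j) * (f j * g i)) := by
      rw [hr' i, hr' j, ← Real.sqrt_mul (mul_nonneg (hf i) (hg i))]
      congr 1
      ring
    rw [h1]
    exact two_mul_sqrt_le_add (mul_nonneg (hf i) (hg j)) (mul_nonneg (hf j) (hg i))
  have keystrict : 2 * (r i0 * r ir) < f i0 * g ir + f ir * g i0 := by
    have h1 : r i0 * r ir = Real.sqrt ((f i0 * g ir) * (f ir * g i0)) := by
      rw [hr' i0, hr' ir, ← Real.sqrt_mul (mul_nonneg (hf i0) (hg i0))]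
      congr 1
      ring
    rw [h1]
    exact two_mul_sqrt_lt_add (mul_nonneg (hf i0) (hg ir)) (mul_nonneg (hf ir) (hg i0))
      (ne_of_lt hlt).symm
  have e1 : (∑ i, f i) * (∑ i, g i) = ∑ i : ι, ∑ j : ι, f i * g j :=
    Finset.sum_mul_sum _ _ _ _
  have e2 : ∑ i : ι, ∑ j : ι, f j * g i = (∑ i, f i) * (∑ i, g i) := by
    rw [Finset.sum_comm, ← e1]
  have e3 : (∑ i, r i) ^ 2 = ∑ i : ι, ∑ j : ι, r i * r j := by
    rw [sq, Finset.sum_mul_sum]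
  have e4 : ∑ i : ι, ∑ j : ι, (f i * g j + f j * g i - 2 * (r i * r j))
      = (∑ i : ι, ∑ j : ι, f i * g j) + (∑ i : ι, ∑ j : ι, f j * g i)
        - 2 * (∑ i : ι, ∑ j : ι, r i * r j) := by
    simp [Finset.sum_add_distrib, Finset.sum_sub_distrib, Finset.mul_sum]
  have hpos : 0 < ∑ i : ι, ∑ j : ι, (f i * g j + f j * g i - 2 * (r i * r j)) := by
    apply Finset.sum_pos'
    · intro i _
      exact Finset.sum_nonneg fun j _ => by linarith [key i j]
    · refine ⟨i0, Finset.mem_univ _, Finset.sum_pos' (fun j _ => by linarith [key i0 j])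
        ⟨ir, Finset.mem_univ _, by linarith [keystrict]⟩⟩
  rw [e4, e2, ← e1, ← e3] at hpos
  linarith

lemma cross_lt {W0 Wr x y H : ℝ} (hW0 : 0 < W0) (hWr : 0 < Wr) (hy : 0 < y)
    (hxy : y < x) (hH : 0 < H) :
    Wr / y ^ 2 * (y / (y + H)) * (W0 / x ^ 2 * ((x + H) / x))
      < W0 / x ^ 2 * (x / (x + H)) * (Wr / y ^ 2 * ((y + H) / y)) := by
  have hx : 0 < x := hy.trans hxy
  have hyH : 0 < y + H := by linarith
  have hxH : 0 < x + H := by linarith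
  have e1 : Wr / y ^ 2 * (y / (y + H)) * (W0 / x ^ 2 * ((x + H) / x))
      = Wr * W0 * ((x + H) * y) / (y ^ 2 * (y + H) * x ^ 3) := by
    field_simp
  have e2 : W0 / x ^ 2 * (x / (x + H)) * (Wr / y ^ 2 * ((y + H) / y))
      = Wr * W0 * ((y + H) * x) / (x ^ 2 * (x + H) * y ^ 3) := by
    field_simp
  rw [e1, e2, div_lt_div_iff₀ (by positivity) (by positivity)]
  have huv : (x + H) * y < (y + H) * x := by nlinarith
  have key : (x + H) ^ 2 * y ^ 2 < (y + H) ^ 2 * x ^ 2 := by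
    nlinarith [mul_pos (sub_pos.mpr huv) (show (0:ℝ) < (x + H) * y + (y + H) * x by positivity)]
  have k2 := mul_lt_mul_of_pos_left key (by positivity : (0:ℝ) < x ^ 2 * y ^ 2)
  have k3 := mul_lt_mul_of_pos_left k2 (mul_pos hWr hW0)
  nlinarith [k3]

set_option maxHeartbeats 1000000 in
/-- Monotone-approach property of the successive rational approximation: if
`ψ(ν⁰) > 1` and `νt` is the unique solution of `ψ(ν) = 1` on `(δ_r, ∞)`, then
the update `ν¹ = ν⁰ + 2ψ(ν⁰)(1 - √ψ(ν⁰))/ψ'(ν⁰)` satisfies `ν⁰ < ν¹ < νt`. -/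
theorem rational_approx_monotone_update
    (n : ℕ) (δ : Fin (n+1) → ℝ) (c : Fin (n+1) → ℂ)
    (hmono : Monotone δ) (hneg : ∀ i, δ i < 0)
    (hnotall : ∃ i j, δ i ≠ δ j)
    (hc1 : ∃ i, δ i = δ 0 ∧ c i ≠ 0)
    (hcr : ∃ i, δ i = δ (Fin.last n) ∧ c i ≠ 0)
    (ψ : ℝ → ℝ) (hψ : ψ = fun ν => ∑ i, ‖c i‖^2 / (δ i - ν)^2)
    (ν0 : ℝ) (hν0 : δ (Fin.last n) < ν0) (hψν0 : 1 < ψ ν0)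
    (νt : ℝ) (hνt1 : δ (Fin.last n) < νt) (hνt2 : ψ νt = 1)
    (hνtunique : ∀ ν : ℝ, δ (Fin.last n) < ν → ψ ν = 1 → ν = νt)
    (ν1 : ℝ)
    (hν1 : ν1 = ν0 + 2 * ψ ν0 * (1 - Real.sqrt (ψ ν0)) / deriv ψ ν0) :
    ν0 < ν1 ∧ ν1 < νt := by
  obtain ⟨i0, hi0, hci0⟩ := hc1
  obtain ⟨ir, hir, hcir⟩ := hcr
  have hwi0 : 0 < ‖c i0‖ ^ 2 := pow_pos (norm_pos_iff.mpr hci0) 2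
  have hwir : 0 < ‖c ir‖ ^ 2 := pow_pos (norm_pos_iff.mpr hcir) 2
  have hδle : ∀ i, δ i ≤ δ (Fin.last n) := fun i => hmono (Fin.le_last i)
  have h0lt : δ 0 < δ (Fin.last n) := by
    refine lt_of_le_of_ne (hmono (Fin.zero_le _)) fun h => ?_
    obtain ⟨i, j, hij⟩ := hnotall
    have hall : ∀ k, δ k = δ 0 := fun k =>
      le_antisymm (h ▸ hδle k) (hmono (Fin.zero_le k))
    exact hij ((hall i).trans (hall j).symm)
  have hd : ∀ i, 0 < ν0 - δ i := fun i => sub_pos.2 ((hδle i).trans_lt hν0)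
  obtain ⟨S2, hS2def⟩ : ∃ S2 : ℝ, S2 = ∑ i, ‖c i‖^2 / (ν0 - δ i)^2 := ⟨_, rfl⟩
  obtain ⟨S3, hS3def⟩ : ∃ S3 : ℝ, S3 = ∑ i, ‖c i‖^2 / (ν0 - δ i)^3 := ⟨_, rfl⟩
  have hψ0 : ψ ν0 = S2 := by
    rw [hψ, hS2def]
    exact Finset.sum_congr rfl fun i _ => by
      rw [show (δ i - ν0)^2 = (ν0 - δ i)^2 by ring]
  have hψν0' : 1 < S2 := hψ0 ▸ hψν0
  have hS2pos : 0 < S2 := by linarith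
  have hS3pos : 0 < S3 := by
    rw [hS3def]
    exact Finset.sum_pos' (fun i _ => div_nonneg (sq_nonneg _) (pow_pos (hd i) 3).le)
      ⟨ir, Finset.mem_univ _, div_pos hwir (pow_pos (hd ir) 3)⟩
  have h3ne : S3 ≠ 0 := ne_of_gt hS3pos
  -- the derivative of ψ at ν0
  have hderiv : deriv (fun ν => ∑ i, ‖c i‖^2 / (δ i - ν)^2) ν0 = -2 * S3 := by
    have hterm : ∀ i : Fin (n+1), HasDerivAt (fun ν : ℝ => ‖c i‖^2 / (δ i - ν)^2)
        (2 * ‖c i‖^2 / (δ i - ν0)^3) ν0 := by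
      intro i
      have h1 : HasDerivAt (fun ν : ℝ => δ i - ν) (-1) ν0 := by
        simpa using (hasDerivAt_id ν0).const_sub (δ i)
      have h2 := h1.fun_pow 2
      have hne0 : δ i - ν0 ≠ 0 := by
        have := hd i
        intro h
        rw [show δ i - ν0 = -(ν0 - δ i) by ring, neg_eq_zero] at h
        linarith
      have hne : (δ i - ν0) ^ 2 ≠ 0 := pow_ne_zero 2 hne0
      have h3 := (h2.fun_inv hne).const_mul (‖c i‖^2)
      have h4 : HasDerivAt (fun ν : ℝ => ‖c i‖^2 * ((δ i - ν)^2)⁻¹)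
          (2 * ‖c i‖^2 / (δ i - ν0)^3) ν0 := by
        refine h3.congr_deriv ?_
        push_cast
        field_simp
      have heq : (fun ν : ℝ => ‖c i‖^2 / (δ i - ν)^2)
          = fun ν : ℝ => ‖c i‖^2 * ((δ i - ν)^2)⁻¹ := by
        funext ν; rw [div_eq_mul_inv]
      rw [heq]
      exact h4
    have hsum := HasDerivAt.fun_sum (fun i (_ : i ∈ Finset.univ) => hterm i)
    rw [hsum.deriv, hS3def, Finset.mul_sum]
    refine Finset.sum_congr rfl fun i _ => ?_
    rw [show (δ i - ν0)^3 = -((ν0 - δ i)^3) by ring, div_neg]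
    ring
  have hd2 : deriv ψ ν0 = -2 * S3 := by rw [hψ]; exact hderiv
  rw [hψ0, hd2] at hν1
  obtain ⟨H, hHdef⟩ : ∃ H : ℝ, H = S2 * (Real.sqrt S2 - 1) / S3 := ⟨_, rfl⟩
  have hsql : 1 < Real.sqrt S2 := by
    have := Real.sqrt_lt_sqrt (by norm_num) hψν0'
    simpa using this
  have hHpos : 0 < H := by
    rw [hHdef]
    exact div_pos (mul_pos hS2pos (by linarith)) hS3pos
  have hv1 : ν1 = ν0 + H := by
    rw [hν1, hHdef]
    field_simp
    ring
  have part1 : ν0 < ν1 := by rw [hv1]; linarith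
  -- Part 2 : ψ ν1 > 1 via two Cauchy–Schwarz steps
  obtain ⟨f, hfdef⟩ : ∃ f : Fin (n+1) → ℝ,
      f = fun i => ‖c i‖^2 / (ν0 - δ i)^2 * ((ν0 - δ i) / (ν0 - δ i + H)) := ⟨_, rfl⟩
  obtain ⟨g, hgdef⟩ : ∃ g : Fin (n+1) → ℝ,
      g = fun i => ‖c i‖^2 / (ν0 - δ i)^2 * ((ν0 - δ i + H) / (ν0 - δ i)) := ⟨_, rfl⟩
  have hdH : ∀ i, 0 < ν0 - δ i + H := fun i => by linarith [hd i]
  have hfnn : ∀ i, 0 ≤ f i := fun i => by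
    simp only [hfdef]
    exact mul_nonneg (div_nonneg (sq_nonneg _) (sq_nonneg _))
      (div_nonneg (hd i).le (hdH i).le)
  have hgnn : ∀ i, 0 ≤ g i := fun i => by
    simp only [hgdef]
    exact mul_nonneg (div_nonneg (sq_nonneg _) (sq_nonneg _))
      (div_nonneg (hdH i).le (hd i).le)
  have hrnn : ∀ i, 0 ≤ ‖c i‖^2 / (ν0 - δ i)^2 := fun i =>
    div_nonneg (sq_nonneg _) (sq_nonneg _)
  have hsq : ∀ i, (‖c i‖^2 / (ν0 - δ i)^2) ^ 2 = f i * g i := fun i => by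
    have h1 := (hd i).ne'
    have h2 := (hdH i).ne'
    simp only [hfdef, hgdef]
    field_simp
  have hlt : f ir * g i0 < f i0 * g ir := by
    simp only [hfdef, hgdef, hi0, hir]
    exact cross_lt hwi0 hwir (by linarith) (by linarith) hHpos
  have hB : S2 ^ 2 < (∑ i, f i) * (∑ i, g i) := by
    have := strict_cauchy_schwarz f g (fun i => ‖c i‖^2 / (ν0 - δ i)^2)
      hfnn hgnn hrnn hsq i0 ir hlt
    rwa [← hS2def] at this
  have hQ : (∑ i, g i) = S2 * Real.sqrt S2 := by
    have e : (∑ i, g i) = S2 + H * S3 := by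
      rw [hS2def, hS3def, Finset.mul_sum, ← Finset.sum_add_distrib]
      refine Finset.sum_congr rfl fun i _ => ?_
      simp only [hgdef]
      have h1 := (hd i).ne'
      field_simp
    rw [e, hHdef]
    field_simp
    ring
  have hP : Real.sqrt S2 < ∑ i, f i := by
    rw [hQ] at hB
    have hQpos : 0 < S2 * Real.sqrt S2 := mul_pos hS2pos (by linarith)
    have key : Real.sqrt S2 * (S2 * Real.sqrt S2) = S2 ^ 2 := by
      rw [show Real.sqrt S2 * (S2 * Real.sqrt S2)
          = Real.sqrt S2 * Real.sqrt S2 * S2 by ring, Real.mul_self_sqrt hS2pos.le]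
      ring
    by_contra hnot
    push_neg at hnot
    have := mul_le_mul_of_nonneg_right hnot hQpos.le
    rw [key] at this
    linarith
  have hA : (∑ i, f i) ^ 2 ≤ (∑ i, ‖c i‖^2 / (ν0 - δ i + H)^2) * S2 := by
    have := Finset.sum_sq_le_sum_mul_sum_of_sq_eq_mul Finset.univ
      (r := f) (f := fun i => ‖c i‖^2 / (ν0 - δ i + H)^2)
      (g := fun i => ‖c i‖^2 / (ν0 - δ i)^2)
      (fun i _ => div_nonneg (sq_nonneg _) (sq_nonneg _)) (fun i _ => hrnn i)
      (fun i _ => by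
        have h1 := (hd i).ne'
        have h2 := (hdH i).ne'
        simp only [hfdef]
        field_simp)
    rwa [← hS2def] at this
  have hψν1 : ψ ν1 = ∑ i, ‖c i‖^2 / (ν0 - δ i + H)^2 := by
    rw [hψ]
    exact Finset.sum_congr rfl fun i _ => by
      rw [show (δ i - ν1)^2 = (ν0 - δ i + H)^2 by rw [hv1]; ring]
  have hgt1 : 1 < ψ ν1 := by
    have hsq2 : S2 < (∑ i, f i) ^ 2 := by
      nlinarith [Real.sq_sqrt hS2pos.le, Real.sqrt_nonneg S2]
    rw [hψν1]
    nlinarith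
  refine ⟨part1, ?_⟩
  rcases lt_trichotomy ν1 νt with hc | hc | hc
  · exact hc
  · rw [hc, hνt2] at hgt1; linarith
  · exfalso
    have hlt2 : ψ ν1 < ψ νt := by
      rw [hψ]
      apply Finset.sum_lt_sum
      · intro i _
        have h1 : 0 < νt - δ i := sub_pos.2 ((hδle i).trans_lt hνt1)
        have h2 : νt - δ i < ν1 - δ i := by linarith
        rw [show (δ i - ν1)^2 = (ν1 - δ i)^2 by ring,
          show (δ i - νt)^2 = (νt - δ i)^2 by ring]
        rw [div_le_div_iff₀ (by nlinarith) (by nlinarith)]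
        have key : (νt - δ i) ^ 2 ≤ (ν1 - δ i) ^ 2 := by nlinarith
        exact mul_le_mul_of_nonneg_left key (sq_nonneg _)
      · refine ⟨ir, Finset.mem_univ _, ?_⟩
        have h1 : 0 < νt - δ ir := sub_pos.2 ((hδle ir).trans_lt hνt1)
        have h2 : νt - δ ir < ν1 - δ ir := by linarith
        rw [show (δ ir - ν1)^2 = (ν1 - δ ir)^2 by ring,
          show (δ ir - νt)^2 = (νt - δ ir)^2 by ring]
        rw [div_lt_div_iff₀ (by nlinarith) (by nlinarith)]
        have key : (νt - δ ir) ^ 2 < (ν1 - δ ir) ^ 2 := by nlinarith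
        exact mul_lt_mul_of_pos_left key hwir
    rw [hνt2] at hlt2
    linarith
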